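/- Let D be a k-derivation of T with D(E₁₁) = D(E₂₂) = D(E₃₃) = 0, determined by a, b, c ∈ k[β] via D(E₁₂) = a·E₁₂, D(β·E₂₂) = b·E₂₂, D(E₂₃) = c·E₂₃, and suppose D maps I(n; n′, n″; V) into itself. Then the induced k-derivation of A = T / I(n; n′, n″; V) is inner if and only if β^m divides (a + c) − (a(0) + c(0)) in k[β] and β^n divides b in k[β]. -/

import Mathlib

open Polynomial Matrix

noncomputable section

/-- `Algebra` structure on the quotient of a `k`-algebra by a ring congruence. -/
instance RingConQuotient.algebra (k R : Type*) [CommSemiring k] [Ring R] [Algebra k R]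
    (c : RingCon R) : Algebra k c.Quotient where
  algebraMap := (RingCon.mk' c).comp (algebraMap k R)
  commutes' := by
    intro r x
    induction x using Quotient.ind
    exact congrArg _ (Algebra.commutes r _)
  smul_def' := by
    intro r x
    induction x using Quotient.ind
    exact congrArg _ (Algebra.smul_def r _)

variable (k : Type*) [Field k]

/-- `D` is a `k`-derivation (as a linear endomorphism of a `k`-algebra). -/
def IsDer {R : Type*} [Ring R] [Algebra k R] (D : R →ₗ[k] R) : Prop :=
  ∀ x y : R, D (x * y) = D x * y + x * D y

/-- `D` is an inner derivation. -/
def IsInner {R : Type*} [Ring R] [Algebra k R] (D : R →ₗ[k] R) : Prop :=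
  ∃ a : R, ∀ x : R, D x = a * x - x * a

/-- The ideal `(β^j)` of `k[β]`, as a `k`-submodule. -/
def Bsub (j : ℕ) : Submodule k (Polynomial k) where
  carrier := {p | X ^ j ∣ p}
  zero_mem' := dvd_zero _
  add_mem' := fun h1 h2 => dvd_add h1 h2
  smul_mem' := fun c p hp => by
    simpa [Polynomial.smul_eq_C_mul] using Dvd.dvd.mul_left hp (C c)

lemma mem_Bsub {k : Type*} [Field k] {j : ℕ} {p : Polynomial k} :
    p ∈ Bsub k j ↔ X ^ j ∣ p := Iff.rfl

/-- The algebra `T`: upper triangular 3×3 matrices over `k[β]` whose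
`(1,1)` and `(3,3)` entries are constants. -/
def Tsub : Subalgebra k (Matrix (Fin 3) (Fin 3) (Polynomial k)) where
  carrier := {M | (∀ i j : Fin 3, j < i → M i j = 0) ∧
      (∃ x : k, M 0 0 = C x) ∧ (∃ z : k, M 2 2 = C z)}
  zero_mem' := ⟨fun _ _ _ => rfl, ⟨0, by simp⟩, ⟨0, by simp⟩⟩
  one_mem' := ⟨fun i j h => Matrix.one_apply_ne h.ne', ⟨1, by simp⟩, ⟨1, by simp⟩⟩
  add_mem' := by
    rintro a b ⟨hal, ⟨x, hax⟩, ⟨z, haz⟩⟩ ⟨hbl, ⟨y, hby⟩, ⟨w, hbw⟩⟩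
    refine ⟨fun i j h => by simp [hal i j h, hbl i j h], ⟨x + y, by simp [hax, hby]⟩,
      ⟨z + w, by simp [haz, hbw]⟩⟩
  mul_mem' := by
    rintro a b ⟨hal, ⟨x, hax⟩, ⟨z, haz⟩⟩ ⟨hbl, ⟨y, hby⟩, ⟨w, hbw⟩⟩
    refine ⟨fun i j h => ?_, ⟨x * y, ?_⟩, ⟨z * w, ?_⟩⟩
    · rw [Matrix.mul_apply]
      apply Finset.sum_eq_zero
      intro l _
      rcases lt_or_ge l i with hl | hl
      · rw [hal i l hl, zero_mul]
      · rw [hbl l j (lt_of_lt_of_le h hl), mul_zero]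
    · rw [Matrix.mul_apply, Fin.sum_univ_three,
        hbl 1 0 (by decide), hbl 2 0 (by decide), hax, hby]
      simp
    · rw [Matrix.mul_apply, Fin.sum_univ_three,
        hal 2 0 (by decide), hal 2 1 (by decide), haz, hbw]
      simp
  algebraMap_mem' := by
    intro r
    refine ⟨fun i j h => ?_, ⟨r, ?_⟩, ⟨r, ?_⟩⟩
    · rw [Matrix.algebraMap_matrix_apply, if_neg h.ne']
    · rw [Matrix.algebraMap_matrix_apply, if_pos rfl]; rfl
    · rw [Matrix.algebraMap_matrix_apply, if_pos rfl]; rfl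

/-- The matrix `p·E₁₂` as an element of `T`. -/
def tE12 (p : Polynomial k) : Tsub k :=
  ⟨Matrix.single 0 1 p, by
    refine ⟨fun i j h => ?_, ⟨0, ?_⟩, ⟨0, ?_⟩⟩
    · fin_cases i <;> fin_cases j <;> simp_all [Matrix.single, Matrix.of_apply]
    · simp [Matrix.single, Matrix.of_apply]
    · simp [Matrix.single, Matrix.of_apply]⟩

/-- The matrix `p·E₂₂` as an element of `T`. -/
def tE22 (p : Polynomial k) : Tsub k :=
  ⟨Matrix.single 1 1 p, by
    refine ⟨fun i j h => ?_, ⟨0, ?_⟩, ⟨0, ?_⟩⟩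
    · fin_cases i <;> fin_cases j <;> simp_all [Matrix.single, Matrix.of_apply]
    · simp [Matrix.single, Matrix.of_apply]
    · simp [Matrix.single, Matrix.of_apply]⟩

/-- The matrix `p·E₂₃` as an element of `T`. -/
def tE23 (p : Polynomial k) : Tsub k :=
  ⟨Matrix.single 1 2 p, by
    refine ⟨fun i j h => ?_, ⟨0, ?_⟩, ⟨0, ?_⟩⟩
    · fin_cases i <;> fin_cases j <;> simp_all [Matrix.single, Matrix.of_apply]
    · simp [Matrix.single, Matrix.of_apply]
    · simp [Matrix.single, Matrix.of_apply]⟩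

/-- The matrix `p·E₁₃` as an element of `T`. -/
def tE13 (p : Polynomial k) : Tsub k :=
  ⟨Matrix.single 0 2 p, by
    refine ⟨fun i j h => ?_, ⟨0, ?_⟩, ⟨0, ?_⟩⟩
    · fin_cases i <;> fin_cases j <;> simp_all [Matrix.single, Matrix.of_apply]
    · simp [Matrix.single, Matrix.of_apply]
    · simp [Matrix.single, Matrix.of_apply]⟩

/-- The idempotent `E₁₁` as an element of `T`. -/
def tE11 : Tsub k :=
  ⟨Matrix.single 0 0 1, by
    refine ⟨fun i j h => ?_, ⟨1, ?_⟩, ⟨0, ?_⟩⟩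
    · fin_cases i <;> fin_cases j <;> simp_all [Matrix.single, Matrix.of_apply]
    · simp [Matrix.single, Matrix.of_apply]
    · simp [Matrix.single, Matrix.of_apply]⟩

/-- The idempotent `E₂₂` as an element of `T`. -/
def tE22one : Tsub k := tE22 k 1

/-- The idempotent `E₃₃` as an element of `T`. -/
def tE33 : Tsub k :=
  ⟨Matrix.single 2 2 1, by
    refine ⟨fun i j h => ?_, ⟨0, ?_⟩, ⟨1, ?_⟩⟩
    · fin_cases i <;> fin_cases j <;> simp_all [Matrix.single, Matrix.of_apply]
    · simp [Matrix.single, Matrix.of_apply]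
    · simp [Matrix.single, Matrix.of_apply]⟩

/-- The underlying set of the ideal `I(n; n', n''; V)` of `T`. -/
def Icar (n n' n'' : ℕ) (V : Submodule k (Polynomial k)) : Set (Tsub k) :=
  {M | (M : Matrix (Fin 3) (Fin 3) (Polynomial k)) 0 0 = 0 ∧
       (M : Matrix (Fin 3) (Fin 3) (Polynomial k)) 2 2 = 0 ∧
       X ^ n' ∣ (M : Matrix (Fin 3) (Fin 3) (Polynomial k)) 0 1 ∧
       (M : Matrix (Fin 3) (Fin 3) (Polynomial k)) 0 2 ∈ V ∧
       X ^ n ∣ (M : Matrix (Fin 3) (Fin 3) (Polynomial k)) 1 1 ∧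
       X ^ n'' ∣ (M : Matrix (Fin 3) (Fin 3) (Polynomial k)) 1 2}

variable {k}

lemma Tsub_lower {a : Tsub k} :
    ∀ i j : Fin 3, j < i → (a : Matrix (Fin 3) (Fin 3) (Polynomial k)) i j = 0 := a.2.1

lemma Tsub_00 (a : Tsub k) : ∃ x : k, (a : Matrix (Fin 3) (Fin 3) (Polynomial k)) 0 0 = C x :=
  a.2.2.1

lemma Tsub_22 (a : Tsub k) : ∃ z : k, (a : Matrix (Fin 3) (Fin 3) (Polynomial k)) 2 2 = C z :=
  a.2.2.2

variable (k)

/-- The two-sided ideal `I(n; n', n''; V)` of `T`. -/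
def Itsi (n n' n'' : ℕ) (V : Submodule k (Polynomial k)) (hn' : n' ≤ n) (hn'' : n'' ≤ n)
    (hV : ∀ p : Polynomial k, X ^ min n' n'' ∣ p → p ∈ V) : TwoSidedIdeal (Tsub k) :=
  TwoSidedIdeal.mk' (Icar k n n' n'' V)
    (by
      refine ⟨rfl, rfl, ?_, ?_, ?_, ?_⟩ <;> simp)
    (by
      rintro a b ⟨h1, h2, h3, h4, h5, h6⟩ ⟨g1, g2, g3, g4, g5, g6⟩
      refine ⟨?_, ?_, ?_, ?_, ?_, ?_⟩ <;>
        simp only [AddMemClass.coe_add, Matrix.add_apply]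
      · rw [h1, g1, add_zero]
      · rw [h2, g2, add_zero]
      · exact dvd_add h3 g3
      · exact V.add_mem h4 g4
      · exact dvd_add h5 g5
      · exact dvd_add h6 g6)
    (by
      rintro a ⟨h1, h2, h3, h4, h5, h6⟩
      refine ⟨?_, ?_, ?_, ?_, ?_, ?_⟩ <;>
        simp only [NegMemClass.coe_neg, Matrix.neg_apply]
      · rw [h1, neg_zero]
      · rw [h2, neg_zero]
      · exact dvd_neg.mpr h3
      · exact V.neg_mem h4
      · exact dvd_neg.mpr h5
      · exact dvd_neg.mpr h6)
    (by
      rintro t a ⟨h1, h2, h3, h4, h5, h6⟩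
      have hta : ((t * a : Tsub k) : Matrix (Fin 3) (Fin 3) (Polynomial k)) =
          (t : Matrix (Fin 3) (Fin 3) (Polynomial k)) * a := rfl
      obtain ⟨x, hx⟩ := Tsub_00 t
      refine ⟨?_, ?_, ?_, ?_, ?_, ?_⟩ <;>
        rw [hta, Matrix.mul_apply, Fin.sum_univ_three]
      · rw [h1, Tsub_lower (a := a) 1 0 (by decide), Tsub_lower (a := a) 2 0 (by decide)]
        simp
      · rw [h2, Tsub_lower (a := t) 2 0 (by decide), Tsub_lower (a := t) 2 1 (by decide)]
        simp
      · rw [Tsub_lower (a := a) 2 1 (by decide)]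
        simp only [mul_zero, add_zero]
        exact dvd_add (Dvd.dvd.mul_left h3 _)
          (Dvd.dvd.mul_left ((pow_dvd_pow X hn').trans h5) _)
      · rw [h2]
        simp only [mul_zero, add_zero]
        refine V.add_mem ?_
          (hV _ (Dvd.dvd.mul_left ((pow_dvd_pow X (min_le_right n' n'')).trans h6) _))
        rw [hx]
        have : C x * (a : Matrix (Fin 3) (Fin 3) (Polynomial k)) 0 2 =
            x • (a : Matrix (Fin 3) (Fin 3) (Polynomial k)) 0 2 := by
          rw [Polynomial.smul_eq_C_mul]
        rw [this]
        exact V.smul_mem _ h4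
      · rw [Tsub_lower (a := t) 1 0 (by decide), Tsub_lower (a := a) 2 1 (by decide)]
        simp only [zero_mul, mul_zero, zero_add, add_zero]
        exact Dvd.dvd.mul_left h5 _
      · rw [Tsub_lower (a := t) 1 0 (by decide), h2]
        simp only [zero_mul, mul_zero, zero_add, add_zero]
        exact Dvd.dvd.mul_left h6 _)
    (by
      rintro a t ⟨h1, h2, h3, h4, h5, h6⟩
      have hta : ((a * t : Tsub k) : Matrix (Fin 3) (Fin 3) (Polynomial k)) =
          (a : Matrix (Fin 3) (Fin 3) (Polynomial k)) * t := rfl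
      obtain ⟨z, hz⟩ := Tsub_22 t
      refine ⟨?_, ?_, ?_, ?_, ?_, ?_⟩ <;>
        rw [hta, Matrix.mul_apply, Fin.sum_univ_three]
      · rw [h1, Tsub_lower (a := t) 1 0 (by decide), Tsub_lower (a := t) 2 0 (by decide)]
        simp
      · rw [h2, Tsub_lower (a := a) 2 0 (by decide), Tsub_lower (a := a) 2 1 (by decide)]
        simp
      · rw [h1, Tsub_lower (a := t) 2 1 (by decide)]
        simp only [zero_mul, mul_zero, zero_add, add_zero]
        exact Dvd.dvd.mul_right h3 _
      · rw [h1]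
        simp only [zero_mul, zero_add]
        refine V.add_mem
          (hV _ (Dvd.dvd.mul_right ((pow_dvd_pow X (min_le_left n' n'')).trans h3) _)) ?_
        rw [hz]
        have : (a : Matrix (Fin 3) (Fin 3) (Polynomial k)) 0 2 * C z =
            z • (a : Matrix (Fin 3) (Fin 3) (Polynomial k)) 0 2 := by
          rw [Polynomial.smul_eq_C_mul, mul_comm]
        rw [this]
        exact V.smul_mem _ h4
      · rw [Tsub_lower (a := a) 1 0 (by decide), Tsub_lower (a := t) 2 1 (by decide)]
        simp only [zero_mul, mul_zero, zero_add, add_zero]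
        exact Dvd.dvd.mul_right h5 _
      · rw [Tsub_lower (a := a) 1 0 (by decide)]
        simp only [zero_mul, zero_add]
        exact dvd_add (Dvd.dvd.mul_right ((pow_dvd_pow X hn'').trans h5) _)
          (Dvd.dvd.mul_right h6 _))

/-- The quotient algebra `A = T / I(n; n', n''; V)`. -/
def Aquot (n n' n'' : ℕ) (V : Submodule k (Polynomial k)) (hn' : n' ≤ n) (hn'' : n'' ≤ n)
    (hV : ∀ p : Polynomial k, X ^ min n' n'' ∣ p → p ∈ V) : Type _ :=
  (Itsi k n n' n'' V hn' hn'' hV).ringCon.Quotient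

instance (n n' n'' : ℕ) (V : Submodule k (Polynomial k)) (hn' : n' ≤ n) (hn'' : n'' ≤ n)
    (hV : ∀ p : Polynomial k, X ^ min n' n'' ∣ p → p ∈ V) :
    Ring (Aquot k n n' n'' V hn' hn'' hV) :=
  inferInstanceAs (Ring (Itsi k n n' n'' V hn' hn'' hV).ringCon.Quotient)

instance (n n' n'' : ℕ) (V : Submodule k (Polynomial k)) (hn' : n' ≤ n) (hn'' : n'' ≤ n)
    (hV : ∀ p : Polynomial k, X ^ min n' n'' ∣ p → p ∈ V) :
    Algebra k (Aquot k n n' n'' V hn' hn'' hV) :=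
  inferInstanceAs (Algebra k (Itsi k n n' n'' V hn' hn'' hV).ringCon.Quotient)

/-- The quotient map `T → A`. -/
def Amk (n n' n'' : ℕ) (V : Submodule k (Polynomial k)) (hn' : n' ≤ n) (hn'' : n'' ≤ n)
    (hV : ∀ p : Polynomial k, X ^ min n' n'' ∣ p → p ∈ V) :
    Tsub k →+* Aquot k n n' n'' V hn' hn'' hV :=
  RingCon.mk' (Itsi k n n' n'' V hn' hn'' hV).ringCon


set_option synthInstance.maxHeartbeats 400000
set_option maxHeartbeats 1600000
section Stmt6Aux

variable {k : Type*} [Field k]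

lemma tE11_val : ((tE11 k : Tsub k) : Matrix (Fin 3) (Fin 3) (Polynomial k)) = single 0 0 1 := rfl
lemma tE33_val : ((tE33 k : Tsub k) : Matrix (Fin 3) (Fin 3) (Polynomial k)) = single 2 2 1 := rfl
lemma tE12_val (p : Polynomial k) : ((tE12 k p : Tsub k) : Matrix (Fin 3) (Fin 3) (Polynomial k)) = single 0 1 p := rfl
lemma tE13_val (p : Polynomial k) : ((tE13 k p : Tsub k) : Matrix (Fin 3) (Fin 3) (Polynomial k)) = single 0 2 p := rfl
lemma tE22_val (p : Polynomial k) : ((tE22 k p : Tsub k) : Matrix (Fin 3) (Fin 3) (Polynomial k)) = single 1 1 p := rfl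
lemma tE23_val (p : Polynomial k) : ((tE23 k p : Tsub k) : Matrix (Fin 3) (Fin 3) (Polynomial k)) = single 1 2 p := rfl

lemma tE12_add (p q : Polynomial k) : tE12 k (p + q) = tE12 k p + tE12 k q :=
  Subtype.ext (Matrix.single_add _ _ _ _)
lemma tE13_add (p q : Polynomial k) : tE13 k (p + q) = tE13 k p + tE13 k q :=
  Subtype.ext (Matrix.single_add _ _ _ _)
lemma tE22_add (p q : Polynomial k) : tE22 k (p + q) = tE22 k p + tE22 k q :=
  Subtype.ext (Matrix.single_add _ _ _ _)
lemma tE23_add (p q : Polynomial k) : tE23 k (p + q) = tE23 k p + tE23 k q :=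
  Subtype.ext (Matrix.single_add _ _ _ _)

lemma tE22_smul (x : k) (p : Polynomial k) : tE22 k (x • p) = x • tE22 k p :=
  Subtype.ext (Matrix.smul_single x 1 1 p).symm

lemma tE12_mul_tE22 (p q : Polynomial k) : tE12 k p * tE22 k q = tE12 k (p * q) :=
  Subtype.ext (Matrix.single_mul_single_same _ _ _ _ _)
lemma tE22_mul_tE22 (p q : Polynomial k) : tE22 k p * tE22 k q = tE22 k (p * q) :=
  Subtype.ext (Matrix.single_mul_single_same _ _ _ _ _)
lemma tE22_mul_tE23 (p q : Polynomial k) : tE22 k p * tE23 k q = tE23 k (p * q) :=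
  Subtype.ext (Matrix.single_mul_single_same _ _ _ _ _)
lemma tE12_mul_tE23 (p q : Polynomial k) : tE12 k p * tE23 k q = tE13 k (p * q) :=
  Subtype.ext (Matrix.single_mul_single_same _ _ _ _ _)

lemma tDecomp (x : Tsub k) (x1 x3 : k)
    (h1 : (x : Matrix (Fin 3) (Fin 3) (Polynomial k)) 0 0 = C x1)
    (h3 : (x : Matrix (Fin 3) (Fin 3) (Polynomial k)) 2 2 = C x3) :
    x = x1 • tE11 k + tE12 k ((x : Matrix (Fin 3) (Fin 3) (Polynomial k)) 0 1) +
        tE13 k ((x : Matrix (Fin 3) (Fin 3) (Polynomial k)) 0 2) +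
        tE22 k ((x : Matrix (Fin 3) (Fin 3) (Polynomial k)) 1 1) +
        tE23 k ((x : Matrix (Fin 3) (Fin 3) (Polynomial k)) 1 2) + x3 • tE33 k := by
  have hl := x.2.1
  apply Subtype.ext
  ext i j
  fin_cases i <;> fin_cases j <;>
    simp [tE11, tE12, tE13, tE22, tE23, tE33, Matrix.single, Matrix.of_apply,
      Polynomial.smul_eq_C_mul, h1, h3, hl 1 0 (by decide), hl 2 0 (by decide),
      hl 2 1 (by decide)]

lemma tE12_zero : tE12 k (0 : Polynomial k) = 0 := Subtype.ext (Matrix.single_zero _ _)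
lemma tE22_zero : tE22 k (0 : Polynomial k) = 0 := Subtype.ext (Matrix.single_zero _ _)

lemma quad_val (P1 P2 P3 P4 : Polynomial k) :
    ((tE12 k P1 + tE13 k P2 + tE22 k P3 + tE23 k P4 : Tsub k) :
      Matrix (Fin 3) (Fin 3) (Polynomial k)) =
    single 0 1 P1 + single 0 2 P2 + single 1 1 P3 +
      single 1 2 P4 := rfl
lemma quad_00 (P1 P2 P3 P4 : Polynomial k) :
    ((tE12 k P1 + tE13 k P2 + tE22 k P3 + tE23 k P4 : Tsub k) :
      Matrix (Fin 3) (Fin 3) (Polynomial k)) 0 0 = 0 := by rw [quad_val]; simp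
lemma quad_22 (P1 P2 P3 P4 : Polynomial k) :
    ((tE12 k P1 + tE13 k P2 + tE22 k P3 + tE23 k P4 : Tsub k) :
      Matrix (Fin 3) (Fin 3) (Polynomial k)) 2 2 = 0 := by rw [quad_val]; simp
lemma quad_01 (P1 P2 P3 P4 : Polynomial k) :
    ((tE12 k P1 + tE13 k P2 + tE22 k P3 + tE23 k P4 : Tsub k) :
      Matrix (Fin 3) (Fin 3) (Polynomial k)) 0 1 = P1 := by rw [quad_val]; simp
lemma quad_02 (P1 P2 P3 P4 : Polynomial k) :
    ((tE12 k P1 + tE13 k P2 + tE22 k P3 + tE23 k P4 : Tsub k) :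
      Matrix (Fin 3) (Fin 3) (Polynomial k)) 0 2 = P2 := by rw [quad_val]; simp
lemma quad_11 (P1 P2 P3 P4 : Polynomial k) :
    ((tE12 k P1 + tE13 k P2 + tE22 k P3 + tE23 k P4 : Tsub k) :
      Matrix (Fin 3) (Fin 3) (Polynomial k)) 1 1 = P3 := by rw [quad_val]; simp
lemma quad_12 (P1 P2 P3 P4 : Polynomial k) :
    ((tE12 k P1 + tE13 k P2 + tE22 k P3 + tE23 k P4 : Tsub k) :
      Matrix (Fin 3) (Fin 3) (Polynomial k)) 1 2 = P4 := by rw [quad_val]; simp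
end Stmt6Aux
/-- a normalized derivation of `T` with data `(a,b,c)` preserving
`I(n; n', n''; V)` induces an inner derivation of `A = T/I(n; n', n''; V)` iff
`β^m ∣ (a+c) − (a+c)(0)` and `β^n ∣ b`. -/
theorem stmt6 (n n' n'' : ℕ) (h2 : 2 ≤ n) (h1' : 1 ≤ n') (h1'' : 1 ≤ n'')
    (hn' : n' ≤ n) (hn'' : n'' ≤ n) (V : Submodule k (Polynomial k))
    (hV : ∀ p : Polynomial k, X ^ min n' n'' ∣ p → p ∈ V)
    (D : Tsub k →ₗ[k] Tsub k) (hD : IsDer k D)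
    (hD1 : D (tE11 k) = 0) (hD2 : D (tE22one k) = 0) (hD3 : D (tE33 k) = 0)
    (a b c : Polynomial k)
    (ha : D (tE12 k 1) = tE12 k a) (hb : D (tE22 k X) = tE22 k b)
    (hc : D (tE23 k 1) = tE23 k c)
    (hDI : ∀ x ∈ Icar k n n' n'' V, D x ∈ Icar k n n' n'' V) :
    (∃ α : Aquot k n n' n'' V hn' hn'' hV, ∀ x : Tsub k,
        Amk k n n' n'' V hn' hn'' hV (D x) =
          α * Amk k n n' n'' V hn' hn'' hV x - Amk k n n' n'' V hn' hn'' hV x * α) ↔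
      (X ^ min n' n'' ∣ (a + c) - C ((a + c).eval 0) ∧ X ^ n ∣ b) := by
  classical
  have hml : min n' n'' ≤ n' := min_le_left _ _
  have hmr : min n' n'' ≤ n'' := min_le_right _ _
  -- quotient equality iff difference lies in the ideal
  have key : ∀ y z : Tsub k,
      Amk k n n' n'' V hn' hn'' hV y = Amk k n n' n'' V hn' hn'' hV z ↔
        y - z ∈ Icar k n n' n'' V := by
    intro y z
    constructor
    · intro h
      exact (TwoSidedIdeal.mem_mk' _ _ _ _ _ _ _).mp
        ((TwoSidedIdeal.rel_iff _ _ _).mp ((RingCon.eq _).mp h))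
    · intro h
      exact (RingCon.eq _).mpr ((TwoSidedIdeal.rel_iff _ _ _).mpr
        ((TwoSidedIdeal.mem_mk' _ _ _ _ _ _ _).mpr h))
  -- derivation formulas
  have hD22C : ∀ x : k, D (tE22 k (C x)) = 0 := by
    intro x
    have e : tE22 k (C x) = x • tE22one k := by
      rw [tE22one, ← tE22_smul]
      congr 1
      simp [Polynomial.smul_eq_C_mul]
    rw [e, LinearMap.map_smul, hD2, smul_zero]
  have hD22 : ∀ p : Polynomial k, D (tE22 k p) = tE22 k (b * derivative p) := by
    intro p
    induction p using Polynomial.induction_on with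
    | C x => rw [hD22C x, derivative_C, mul_zero, tE22_zero]
    | add p q hp hq => rw [tE22_add, map_add, hp, hq, derivative_add, mul_add, tE22_add]
    | monomial j x ih =>
      have e : (C x * X ^ (j + 1) : Polynomial k) = C x * X ^ j * X := by ring
      rw [e, ← tE22_mul_tE22, hD, ih, hb, tE22_mul_tE22, tE22_mul_tE22, ← tE22_add]
      congr 1
      simp only [derivative_mul, derivative_X, derivative_C, mul_one, zero_mul, zero_add]
      ring
  have hD12 : ∀ p : Polynomial k, D (tE12 k p) = tE12 k (a * p + b * derivative p) := by
    intro p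
    have e : tE12 k p = tE12 k 1 * tE22 k p := by rw [tE12_mul_tE22, one_mul]
    rw [e, hD, ha, hD22, tE12_mul_tE22, tE12_mul_tE22, ← tE12_add]
    congr 1
    ring
  have hD23 : ∀ p : Polynomial k, D (tE23 k p) = tE23 k (b * derivative p + c * p) := by
    intro p
    have e : tE23 k p = tE22 k p * tE23 k 1 := by rw [tE22_mul_tE23, mul_one]
    rw [e, hD, hc, hD22, tE22_mul_tE23, tE22_mul_tE23, ← tE23_add]
    congr 1
    ring
  have hD13 : ∀ p : Polynomial k, D (tE13 k p) = tE13 k ((a + c) * p + b * derivative p) := by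
    intro p
    have e : tE13 k p = tE12 k p * tE23 k 1 := by rw [tE12_mul_tE23, mul_one]
    rw [e, hD, hc, hD12, tE12_mul_tE23, tE12_mul_tE23, ← tE13_add]
    congr 1
    ring
  have hDfull : ∀ x : Tsub k, D x =
      tE12 k (a * (x : Matrix (Fin 3) (Fin 3) (Polynomial k)) 0 1 +
        b * derivative ((x : Matrix (Fin 3) (Fin 3) (Polynomial k)) 0 1)) +
      tE13 k ((a + c) * (x : Matrix (Fin 3) (Fin 3) (Polynomial k)) 0 2 +
        b * derivative ((x : Matrix (Fin 3) (Fin 3) (Polynomial k)) 0 2)) +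
      tE22 k (b * derivative ((x : Matrix (Fin 3) (Fin 3) (Polynomial k)) 1 1)) +
      tE23 k (b * derivative ((x : Matrix (Fin 3) (Fin 3) (Polynomial k)) 1 2) +
        c * (x : Matrix (Fin 3) (Fin 3) (Polynomial k)) 1 2) := by
    intro x
    obtain ⟨y1, hy1⟩ := Tsub_00 x
    obtain ⟨y3, hy3⟩ := Tsub_22 x
    conv_lhs => rw [tDecomp x y1 y3 hy1 hy3]
    rw [map_add, map_add, map_add, map_add, map_add, LinearMap.map_smul, LinearMap.map_smul, hD1, hD3,
      smul_zero, smul_zero, hD12, hD13, hD22, hD23, zero_add, add_zero]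
  constructor
  · rintro ⟨α, hα⟩
    obtain ⟨t, ht⟩ := Quotient.exists_rep α
    have ht' : Amk k n n' n'' V hn' hn'' hV t = α := ht
    have hgen : ∀ x : Tsub k, D x - (t * x - x * t) ∈ Icar k n n' n'' V := by
      intro x
      refine (key _ _).mp ?_
      rw [hα x, ← ht', ← _root_.map_mul, ← _root_.map_mul, ← map_sub]
    obtain ⟨x1, hx1⟩ := Tsub_00 t
    obtain ⟨x3, hx3⟩ := Tsub_22 t
    have hbdvd : X ^ n ∣ b := by
      obtain ⟨-, -, -, -, h5, -⟩ := by
        have h := hgen (tE22 k X); rwa [hb] at h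
      have e : ((tE22 k b - (t * tE22 k X - tE22 k X * t) : Tsub k) :
          Matrix (Fin 3) (Fin 3) (Polynomial k)) 1 1 = b := by
        simp only [AddSubgroupClass.coe_sub, MulMemClass.coe_mul, Matrix.sub_apply, tE22_val,
          Matrix.single_apply_same, Matrix.mul_single_apply_same,
          Matrix.single_mul_apply_same]
        ring
      rwa [e] at h5
    have hadvd : X ^ n' ∣ a - C x1 + (t : Matrix (Fin 3) (Fin 3) (Polynomial k)) 1 1 := by
      obtain ⟨-, -, h3, -, -, -⟩ := by
        have h := hgen (tE12 k 1); rwa [ha] at h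
      have e : ((tE12 k a - (t * tE12 k 1 - tE12 k 1 * t) : Tsub k) :
          Matrix (Fin 3) (Fin 3) (Polynomial k)) 0 1 =
          a - C x1 + (t : Matrix (Fin 3) (Fin 3) (Polynomial k)) 1 1 := by
        simp only [AddSubgroupClass.coe_sub, MulMemClass.coe_mul, Matrix.sub_apply, tE12_val,
          Matrix.single_apply_same, Matrix.mul_single_apply_same,
          Matrix.single_mul_apply_same, hx1]
        ring
      rwa [e] at h3
    have hcdvd : X ^ n'' ∣ c - (t : Matrix (Fin 3) (Fin 3) (Polynomial k)) 1 1 + C x3 := by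
      obtain ⟨-, -, -, -, -, h6⟩ := by
        have h := hgen (tE23 k 1); rwa [hc] at h
      have e : ((tE23 k c - (t * tE23 k 1 - tE23 k 1 * t) : Tsub k) :
          Matrix (Fin 3) (Fin 3) (Polynomial k)) 1 2 =
          c - (t : Matrix (Fin 3) (Fin 3) (Polynomial k)) 1 1 + C x3 := by
        simp only [AddSubgroupClass.coe_sub, MulMemClass.coe_mul, Matrix.sub_apply, tE23_val,
          Matrix.single_apply_same, Matrix.mul_single_apply_same,
          Matrix.single_mul_apply_same, hx3]
        ring
      rwa [e] at h6
    refine ⟨?_, hbdvd⟩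
    have hsum : X ^ min n' n'' ∣ (a + c) - C (x1 - x3) := by
      have h := dvd_add ((pow_dvd_pow X hml).trans hadvd) ((pow_dvd_pow X hmr).trans hcdvd)
      have e : (a - C x1 + (t : Matrix (Fin 3) (Fin 3) (Polynomial k)) 1 1) +
          (c - (t : Matrix (Fin 3) (Fin 3) (Polynomial k)) 1 1 + C x3) =
          (a + c) - C (x1 - x3) := by
        rw [map_sub]; ring
      rwa [e] at h
    have hm0 : min n' n'' ≠ 0 := Nat.one_le_iff_ne_zero.mp (le_min h1' h1'')
    have hX : (X : Polynomial k) ∣ (a + c) - C (x1 - x3) :=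
      (dvd_pow_self X hm0).trans hsum
    have h0 : ((a + c) - C (x1 - x3)).coeff 0 = 0 := Polynomial.X_dvd_iff.mp hX
    have hval : (a + c).eval 0 = x1 - x3 := by
      have := h0
      rw [Polynomial.coeff_sub, Polynomial.coeff_C_zero, sub_eq_zero,
        Polynomial.coeff_zero_eq_eval_zero] at this
      exact this
    rwa [hval]
  · rintro ⟨hac, hbdvd⟩
    obtain ⟨u, hu1, hu2⟩ : ∃ u : Polynomial k,
        (X ^ n' ∣ a - C ((a + c).eval 0) + u) ∧ (X ^ n'' ∣ c - u) := by
      rcases le_total n' n'' with h | h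
      · refine ⟨c, ?_, by simp⟩
        have e : a - C ((a + c).eval 0) + c = (a + c) - C ((a + c).eval 0) := by ring
        rw [e, ← min_eq_left h]
        exact hac
      · refine ⟨C ((a + c).eval 0) - a, ?_, ?_⟩
        · have e : a - C ((a + c).eval 0) + (C ((a + c).eval 0) - a) = 0 := by ring
          rw [e]
          exact dvd_zero _
        · have e : c - (C ((a + c).eval 0) - a) = (a + c) - C ((a + c).eval 0) := by ring
          rw [e, ← min_eq_right h]
          exact hac
    set t : Tsub k := ((a + c).eval 0 : k) • tE11 k + tE22 k u with htdef
    refine ⟨Amk k n n' n'' V hn' hn'' hV t, fun x => ?_⟩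
    rw [← _root_.map_mul, ← _root_.map_mul, ← map_sub]
    refine (key _ _).mpr ?_
    have hl := x.2.1
    have hsub : D x - (t * x - x * t) =
        tE12 k ((a - C ((a + c).eval 0) + u) * (x : Matrix (Fin 3) (Fin 3) (Polynomial k)) 0 1 +
          b * derivative ((x : Matrix (Fin 3) (Fin 3) (Polynomial k)) 0 1)) +
        tE13 k (((a + c) - C ((a + c).eval 0)) * (x : Matrix (Fin 3) (Fin 3) (Polynomial k)) 0 2 +
          b * derivative ((x : Matrix (Fin 3) (Fin 3) (Polynomial k)) 0 2)) +
        tE22 k (b * derivative ((x : Matrix (Fin 3) (Fin 3) (Polynomial k)) 1 1)) +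
        tE23 k ((c - u) * (x : Matrix (Fin 3) (Fin 3) (Polynomial k)) 1 2 +
          b * derivative ((x : Matrix (Fin 3) (Fin 3) (Polynomial k)) 1 2)) := by
      rw [hDfull x]
      apply Subtype.ext
      refine Matrix.ext fun i j => ?_
      fin_cases i <;> fin_cases j <;>
        simp [htdef, AddSubgroupClass.coe_sub, MulMemClass.coe_mul, AddMemClass.coe_add,
          SetLike.val_smul, tE11_val, tE12_val, tE13_val, tE22_val, tE23_val,
          Matrix.mul_apply, Fin.sum_univ_three, Matrix.single, Matrix.of_apply,
          Polynomial.smul_eq_C_mul, hl 1 0 (by decide), hl 2 0 (by decide),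
          hl 2 1 (by decide)] <;> ring
    rw [hsub]
    refine ⟨?_, ?_, ?_, ?_, ?_, ?_⟩
    · rw [quad_00]
    · rw [quad_22]
    · rw [quad_01]
      exact dvd_add (hu1.mul_right _) (((pow_dvd_pow X hn').trans hbdvd).mul_right _)
    · rw [quad_02]
      refine V.add_mem (hV _ ?_) (hV _ ?_)
      · exact hac.mul_right _
      · exact ((pow_dvd_pow X (hml.trans hn')).trans hbdvd).mul_right _
    · rw [quad_11]
      exact hbdvd.mul_right _
    · rw [quad_12]
      exact dvd_add (hu2.mul_right _) (((pow_dvd_pow X hn'').trans hbdvd).mul_right _)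

end
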